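/- For complex numbers z₁, z₂ with |z₁| > |z₂| > 0, and z₀ = z₁ - z₂, the identity z₁⁻¹δ((x₀ - x₁)/z₁) · x₂⁻¹δ((x₀ - z₂)/x₂) = x₀⁻¹δ((z₁ + x₁)/x₀) · x₂⁻¹δ((z₀ + x₁)/x₂) holds, where the left-hand side converges absolutely in the sense that the coefficient of each monomial in x₀, x₁, x₂ is an absolutely convergent series in z₁ and z₂, while the right-hand side requires no convergence condition. -/

import Mathlib

noncomputable def gc (x : ℂ) (j : ℕ) : ℂ :=
  (∏ i ∈ Finset.range j, (x - (i : ℂ))) / (Nat.factorial j : ℂ)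

lemma descP_prod (x : ℂ) : ∀ j : ℕ, (descPochhammer ℤ j).smeval x = ∏ i ∈ Finset.range j, (x - (i : ℂ))
  | 0 => by simp [descPochhammer_zero, Polynomial.smeval_one]
  | (j+1) => by
      rw [descPochhammer_succ_right, Polynomial.smeval_mul, descP_prod x j,
        Finset.prod_range_succ, Polynomial.smeval_sub, Polynomial.smeval_X,
        Polynomial.smeval_natCast]
      simp

lemma gc_eq (x : ℂ) (j : ℕ) : gc x j = Ring.choose x j := by
  have h := Ring.descPochhammer_eq_factorial_smul_choose x j
  rw [descP_prod x j] at h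
  rw [gc, h, nsmul_eq_mul, mul_div_cancel_left₀]
  exact_mod_cast (Nat.factorial_ne_zero j)

lemma gc_natCast (s k : ℕ) : gc (s : ℂ) k = (s.choose k : ℂ) := by
  rw [gc_eq, Ring.choose_natCast]

lemma gc_vand (x y : ℂ) (J : ℕ) :
    gc (x + y) J = ∑ j ∈ Finset.range (J + 1), gc x j * gc y (J - j) := by
  rw [gc_eq, Ring.add_choose_eq J (Commute.all x y),
    Finset.Nat.sum_antidiagonal_eq_sum_range_succ_mk]
  exact Finset.sum_congr rfl fun j hj => by rw [gc_eq, gc_eq]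

lemma gc_reflect (x : ℂ) (J : ℕ) : gc x J * (-1) ^ J = gc ((J : ℂ) - 1 - x) J := by
  unfold gc
  rw [div_mul_eq_mul_div]
  congr 1
  have h : ∀ i ∈ Finset.range J, ((J : ℂ) - 1 - x - (i:ℂ)) = (((J - 1 - i : ℕ) : ℂ) - x) := by
    intro i hi
    have hi' : i < J := Finset.mem_range.mp hi
    push_cast [Nat.cast_sub (by omega : i ≤ J - 1), Nat.cast_sub (by omega : 1 ≤ J)]
    ring
  have hpow : ((-1:ℂ))^J = ∏ _i ∈ Finset.range J, (-1:ℂ) := by simp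
  rw [Finset.prod_congr rfl h, Finset.prod_range_reflect (fun i => ((i:ℂ) - x)) J,
    hpow, ← Finset.prod_mul_distrib]
  exact Finset.prod_congr rfl fun i _ => by ring

lemma gc_swap (x : ℂ) (k r : ℕ) : gc x k * gc (x - k) r = gc x r * gc (x - r) k := by
  have key : ∀ k r : ℕ, (∏ i ∈ Finset.range k, (x - i)) * ∏ i ∈ Finset.range r, (x - k - i)
      = ∏ i ∈ Finset.range (k + r), (x - i) := by
    intro k r
    rw [Finset.prod_range_add]
    congr 1
    exact Finset.prod_congr rfl fun i _ => by push_cast; ring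
  unfold gc
  rw [div_mul_div_comm, div_mul_div_comm, key, add_comm k r, ← key r k]
  ring

lemma gc_negSucc (s k : ℕ) : gc (-(s : ℂ) - 1) k = (-1) ^ k * ((k + s).choose s : ℂ) := by
  have h1 : ∀ k : ℕ, (∏ i ∈ Finset.range k, ((s : ℂ) + 1 + i)) = ((s + 1).ascFactorial k : ℂ) := by
    intro k
    induction k with
    | zero => simp
    | succ k ih => rw [Finset.prod_range_succ, ih, Nat.ascFactorial_succ]; push_cast; ring
  have hpow : ((-1:ℂ))^k = ∏ _i ∈ Finset.range k, (-1:ℂ) := by simp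
  have h2 : (∏ i ∈ Finset.range k, (-(s:ℂ) - 1 - i)) =
      (-1) ^ k * ∏ i ∈ Finset.range k, ((s : ℂ) + 1 + i) := by
    rw [hpow, ← Finset.prod_mul_distrib]
    exact Finset.prod_congr rfl fun i _ => by ring
  rw [gc, h2, h1, Nat.ascFactorial_eq_factorial_mul_choose]
  push_cast
  rw [mul_div_assoc, mul_comm ((k.factorial : ℂ)), mul_div_assoc, div_self, mul_one,
    Nat.add_comm s k, Nat.choose_symm_add]
  exact_mod_cast Nat.factorial_ne_zero k

lemma binom_hasSum (m : ℤ) {w : ℂ} (hw : ‖w‖ < 1) :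
    HasSum (fun k : ℕ => gc (m : ℂ) k * w ^ k) ((1 + w) ^ m) := by
  cases m with
  | ofNat s =>
    have hz : ∀ k ∉ Finset.range (s + 1), gc ((Int.ofNat s : ℤ) : ℂ) k * w ^ k = 0 := by
      intro k hk
      rw [Finset.mem_range, not_lt] at hk
      rw [show ((Int.ofNat s : ℤ) : ℂ) = ((s : ℕ) : ℂ) by push_cast; rfl, gc_natCast,
        Nat.choose_eq_zero_of_lt (by omega), Nat.cast_zero, zero_mul]
    have hsum : HasSum (fun k : ℕ => gc ((Int.ofNat s : ℤ) : ℂ) k * w ^ k) _ :=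
      hasSum_sum_of_ne_finset_zero hz
    have hv : (∑ b ∈ Finset.range (s + 1), gc ((Int.ofNat s : ℤ) : ℂ) b * w ^ b)
        = (1 + w) ^ (Int.ofNat s : ℤ) := by
      rw [show (Int.ofNat s : ℤ) = (s : ℤ) from rfl, zpow_natCast, add_comm (1:ℂ) w, add_pow]
      refine Finset.sum_congr rfl fun k hk => ?_
      rw [show (((s:ℤ)):ℂ) = ((s:ℕ):ℂ) by norm_cast, gc_natCast]
      ring
    rwa [hv] at hsum
  | negSucc s =>
    have key := hasSum_choose_mul_geometric_of_norm_lt_one (𝕜 := ℂ) s (r := -w)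
      (by rwa [norm_neg])
    have heq : (fun n : ℕ => (((n + s).choose s : ℕ) : ℂ) * (-w) ^ n) =
        fun k : ℕ => gc ((Int.negSucc s : ℤ) : ℂ) k * w ^ k := by
      funext k
      rw [show ((Int.negSucc s : ℤ) : ℂ) = -(s:ℂ) - 1 by push_cast [Int.cast_negSucc]; ring,
        gc_negSucc, neg_pow]
      ring
    rw [heq] at key
    have hval : (1 + w) ^ Int.negSucc s = 1 / (1 - -w) ^ (s + 1) := by
      rw [zpow_negSucc, sub_neg_eq_add, one_div]
    rw [hval]
    exact key

lemma binom_summable (m : ℤ) {w : ℂ} (hw : ‖w‖ < 1) :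
    Summable (fun k : ℕ => ‖gc (m : ℂ) k * w ^ k‖) := by
  cases m with
  | ofNat s =>
    refine summable_of_ne_finset_zero (s := Finset.range (s + 1)) fun k hk => ?_
    rw [Finset.mem_range, not_lt] at hk
    rw [show ((Int.ofNat s : ℤ) : ℂ) = ((s : ℕ) : ℂ) by push_cast; rfl, gc_natCast,
      Nat.choose_eq_zero_of_lt (by omega), Nat.cast_zero, zero_mul, norm_zero]
  | negSucc s =>
    have key := (hasSum_choose_mul_geometric_of_norm_lt_one (𝕜 := ℝ) s (r := ‖w‖)
      (by rwa [Real.norm_eq_abs, abs_of_nonneg (norm_nonneg w)])).summable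
    refine key.congr fun k => ?_
    rw [show ((Int.negSucc s : ℤ) : ℂ) = -(s:ℂ) - 1 by push_cast [Int.cast_negSucc]; ring,
      gc_negSucc]
    rw [norm_mul, norm_mul, norm_pow, norm_pow, norm_neg, norm_one, one_pow, one_mul,
      Complex.norm_natCast]

/-- Generalized binomial coefficient `C(n, j)` for `n ∈ ℤ`, `j ∈ ℕ`, as a complex
number: `n(n-1)⋯(n-j+1)/j!`. -/
noncomputable def genChoose (n : ℤ) (j : ℕ) : ℂ :=
  (∏ i ∈ Finset.range j, ((n : ℂ) - (i : ℂ))) / (Nat.factorial j : ℂ)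

/-- The `n`-th term (`n ∈ ℤ` indexing the first delta function) of the series giving
the coefficient of `x₀^e₀ x₁^J x₂^e₂` in the product
`z₁⁻¹δ((x₀ - x₁)/z₁) · x₂⁻¹δ((x₀ - z₂)/x₂)`, where `(x₀ - x₁)^n` is expanded in
nonnegative powers of `x₁` and `(x₀ - z₂)^k` in nonnegative powers of `z₂`. -/
noncomputable def lhsSubstTerm (z₁ z₂ : ℂ) (e₀ e₂ : ℤ) (J : ℕ) (n : ℤ) : ℂ :=
  if 0 ≤ -e₂ - 1 - e₀ + n - (J : ℤ) then
    genChoose n J * (-1) ^ J * z₁ ^ (-n - 1) *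
      genChoose (-e₂ - 1) ((-e₂ - 1 - e₀ + n - (J : ℤ)).toNat) *
      (-z₂) ^ ((-e₂ - 1 - e₀ + n - (J : ℤ)).toNat)
  else 0

/-- The coefficient of `x₀^e₀ x₁^J x₂^e₂` in
`x₀⁻¹δ((z₁ + x₁)/x₀) · x₂⁻¹δ((z₀ + x₁)/x₂)` with `z₀ = z₁ - z₂`, where
`(z₁ + x₁)^n` and `(z₀ + x₁)^m` are expanded in nonnegative powers of `x₁`;
this is a finite sum, requiring no convergence condition. -/
noncomputable def rhsSubstCoeff (z₁ z₂ : ℂ) (e₀ e₂ : ℤ) (J : ℕ) : ℂ :=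
  ∑ j ∈ Finset.range (J + 1),
    genChoose (-e₀ - 1) j * z₁ ^ (-e₀ - 1 - (j : ℤ)) *
      genChoose (-e₂ - 1) (J - j) * (z₁ - z₂) ^ (-e₂ - 1 - ((J - j : ℕ) : ℤ))

/-- for `|z₁| > |z₂| > 0` and `z₀ = z₁ - z₂`, the identity
`z₁⁻¹δ((x₀ - x₁)/z₁) · x₂⁻¹δ((x₀ - z₂)/x₂) = x₀⁻¹δ((z₁ + x₁)/x₀) · x₂⁻¹δ((z₀ + x₁)/x₂)`
holds: the coefficient of each monomial `x₀^e₀ x₁^J x₂^e₂` on the left-hand side is an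
absolutely convergent series whose sum equals the corresponding (finite-sum)
coefficient on the right-hand side. -/
theorem stmt_10 (z₁ z₂ : ℂ) (h₂ : 0 < ‖z₂‖) (h₁₂ : ‖z₂‖ < ‖z₁‖) (e₀ e₂ : ℤ) (J : ℕ) :
    Summable (fun n : ℤ => ‖lhsSubstTerm z₁ z₂ e₀ e₂ J n‖) ∧
    HasSum (fun n : ℤ => lhsSubstTerm z₁ z₂ e₀ e₂ J n) (rhsSubstCoeff z₁ z₂ e₀ e₂ J) := by
  have hz₁ : z₁ ≠ 0 := by
    intro h; rw [h, norm_zero] at h₁₂; linarith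
  set a : ℤ := -e₀ - 1 with ha
  set b : ℤ := -e₂ - 1 with hb
  set N : ℤ := e₀ + e₂ + 1 + J with hN
  set w : ℂ := -z₂ / z₁ with hwdef
  have hw : ‖w‖ < 1 := by
    rw [hwdef, norm_div, norm_neg, div_lt_one (lt_trans h₂ h₁₂)]; exact h₁₂
  have h1w : 1 + w = (z₁ - z₂) / z₁ := by
    rw [hwdef]; field_simp; ring
  -- the embedding ℕ → ℤ
  have hinj : Function.Injective (fun k : ℕ => N + (k : ℤ)) := by
    intro x y h; simpa using h
  have hvanish : ∀ n : ℤ, n ∉ Set.range (fun k : ℕ => N + (k : ℤ)) →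
      lhsSubstTerm z₁ z₂ e₀ e₂ J n = 0 := by
    intro n hn
    rw [lhsSubstTerm, if_neg]
    intro hcond
    exact hn ⟨(n - N).toNat, by simp only []; omega⟩
  -- coefficients
  set c : ℕ → ℂ := fun j => gc (a : ℂ) j * gc (b : ℂ) (J - j) * z₁ ^ (a + b - (J : ℤ)) with hc
  set m : ℕ → ℤ := fun j => b - ((J - j : ℕ) : ℤ) with hm
  -- formula for the shifted terms
  have hgk : ∀ k : ℕ, lhsSubstTerm z₁ z₂ e₀ e₂ J (N + k) =
      ∑ j ∈ Finset.range (J + 1), c j * (gc ((m j : ℤ) : ℂ) k * w ^ k) := by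
    intro k
    have hcond : (0 : ℤ) ≤ -e₂ - 1 - e₀ + (N + (k : ℤ)) - (J : ℤ) := by omega
    have htn : (-e₂ - 1 - e₀ + (N + (k : ℤ)) - (J : ℤ)).toNat = k := by omega
    rw [lhsSubstTerm, if_pos hcond, htn]
    have hA : genChoose (N + (k : ℤ)) J * (-1) ^ J
        = ∑ j ∈ Finset.range (J + 1), gc (a : ℂ) j * gc (((b - (k : ℤ) : ℤ)) : ℂ) (J - j) := by
      rw [show genChoose (N + (k : ℤ)) J = gc ((N + (k : ℤ) : ℤ) : ℂ) J from rfl, gc_reflect,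
        show (J : ℂ) - 1 - ((N + (k : ℤ) : ℤ) : ℂ) = (a : ℂ) + ((b - (k : ℤ) : ℤ) : ℂ) by
          push_cast [ha, hb, hN]; ring]
      exact gc_vand _ _ J
    have hB : z₁ ^ (-(N + (k : ℤ)) - 1) * (-z₂) ^ k = z₁ ^ (a + b - (J : ℤ)) * w ^ k := by
      rw [show -(N + (k : ℤ)) - 1 = (a + b - (J : ℤ)) + (-(k : ℤ)) by rw [ha, hb, hN]; ring,
        zpow_add₀ hz₁, mul_assoc]
      congr 1
      rw [zpow_neg, zpow_natCast, hwdef, div_pow]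
      ring
    have hswap : ∀ j, gc (((b - (k : ℤ) : ℤ)) : ℂ) (J - j) * gc (b : ℂ) k
        = gc (b : ℂ) (J - j) * gc ((m j : ℤ) : ℂ) k := by
      intro j
      rw [show (((b - (k : ℤ) : ℤ)) : ℂ) = (b : ℂ) - (k : ℕ) by push_cast; ring,
        show ((m j : ℤ) : ℂ) = (b : ℂ) - ((J - j : ℕ) : ℂ) by rw [hm]; push_cast; ring,
        mul_comm]
      exact gc_swap (b : ℂ) k (J - j)
    calc genChoose (N + (k:ℤ)) J * (-1) ^ J * z₁ ^ (-(N + (k:ℤ)) - 1) * genChoose b k * (-z₂) ^ k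
        = (genChoose (N + (k:ℤ)) J * (-1) ^ J) * gc (b : ℂ) k *
            (z₁ ^ (-(N + (k:ℤ)) - 1) * (-z₂) ^ k) := by
          rw [show genChoose b k = gc ((b : ℤ) : ℂ) k from rfl]; ring
      _ = (∑ j ∈ Finset.range (J + 1), gc (a : ℂ) j * gc (((b - (k : ℤ) : ℤ)) : ℂ) (J - j)) *
            gc (b : ℂ) k * (z₁ ^ (a + b - (J : ℤ)) * w ^ k) := by rw [hA, hB]
      _ = ∑ j ∈ Finset.range (J + 1), c j * (gc ((m j : ℤ) : ℂ) k * w ^ k) := by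
          rw [Finset.sum_mul, Finset.sum_mul]
          refine Finset.sum_congr rfl fun j hj => ?_
          rw [hc]
          simp only []
          linear_combination (gc (a:ℂ) j * (z₁ ^ (a + b - (J:ℤ)) * w ^ k)) * hswap j
  have hHS : HasSum (fun k : ℕ => lhsSubstTerm z₁ z₂ e₀ e₂ J (N + k))
      (∑ j ∈ Finset.range (J + 1), c j * (1 + w) ^ (m j)) := by
    rw [show (fun k : ℕ => lhsSubstTerm z₁ z₂ e₀ e₂ J (N + k))
        = fun k : ℕ => ∑ j ∈ Finset.range (J + 1), c j * (gc ((m j : ℤ) : ℂ) k * w ^ k)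
      from funext hgk]
    exact hasSum_sum fun j _ => (binom_hasSum (m j) hw).mul_left (c j)
  have hsum_val : (∑ j ∈ Finset.range (J + 1), c j * (1 + w) ^ (m j))
      = rhsSubstCoeff z₁ z₂ e₀ e₂ J := by
    rw [rhsSubstCoeff]
    refine Finset.sum_congr rfl fun j hj => ?_
    have hj' : j ≤ J := by have := Finset.mem_range.mp hj; omega
    rw [hc, hm]
    simp only []
    rw [h1w, div_zpow]
    have hz : z₁ ^ (a + b - (J : ℤ)) / z₁ ^ (b - ((J - j : ℕ) : ℤ)) = z₁ ^ (a - (j : ℤ)) := by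
      rw [← zpow_sub₀ hz₁]
      congr 1
      push_cast [Nat.cast_sub hj']
      ring
    rw [show gc (a : ℂ) j * gc (b : ℂ) (J - j) * z₁ ^ (a + b - (J : ℤ)) *
          ((z₁ - z₂) ^ (b - ((J - j : ℕ) : ℤ)) / z₁ ^ (b - ((J - j : ℕ) : ℤ)))
        = gc (a : ℂ) j * gc (b : ℂ) (J - j) *
          (z₁ ^ (a + b - (J : ℤ)) / z₁ ^ (b - ((J - j : ℕ) : ℤ))) *
          (z₁ - z₂) ^ (b - ((J - j : ℕ) : ℤ)) by ring, hz,
      show genChoose (-e₀ - 1) j = gc (a : ℂ) j from rfl,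
      show genChoose (-e₂ - 1) (J - j) = gc (b : ℂ) (J - j) from rfl,
      show -e₀ - 1 - (j : ℤ) = a - (j : ℤ) by rw [ha],
      show -e₂ - 1 - ((J - j : ℕ) : ℤ) = b - ((J - j : ℕ) : ℤ) by rw [hb]]
    ring
  constructor
  · rw [← hinj.summable_iff (fun n hn => by rw [hvanish n hn, norm_zero])]
    have hS : Summable (fun k : ℕ =>
        ∑ j ∈ Finset.range (J + 1), ‖c j * (gc ((m j : ℤ) : ℂ) k * w ^ k)‖) :=
      summable_sum fun j _ => by
        simpa [norm_mul] using (binom_summable (m j) hw).mul_left ‖c j‖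
    refine Summable.of_nonneg_of_le (fun k => norm_nonneg _) (fun k => ?_) hS
    show ‖lhsSubstTerm z₁ z₂ e₀ e₂ J (N + k)‖ ≤ _
    rw [hgk k]
    exact norm_sum_le _ _
  · rw [← hsum_val]
    exact (hinj.hasSum_iff hvanish).mp hHS
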